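/- Let δ be a cardinal, M a transitive model of ZFC⁻ with a largest cardinal κ, and P ∈ M a poset with |P|^M = γ where κ^γ = κ holds in M. Then the set P_{γ⁺}(κ)^M of M-subsets of κ of M-size at most γ is an element of M. -/

import Mathlib

open FirstOrder

/-- The language of set theory: a single binary relation `∈`. -/
def memLang : Language :=
  ⟨fun _ => Empty, fun n => match n with | 2 => PUnit | _ => Empty⟩

/-- Any class of ZFC sets is a structure in the language of set theory,
interpreting the binary relation as membership. -/
instance memLangStructure (S : Set ZFSet) : memLang.Structure S where
  funMap := fun {_} f _ => f.elim
  RelMap := fun {n} r x =>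
    match n, r, x with
    | 2, _, x => ((x 0 : ZFSet) ∈ (x 1 : ZFSet))

/-- Realization of a formula of the language of set theory in a class of ZFC
sets, with free variables interpreted by `v`. -/
def RealizeIn (S : Set ZFSet) {n : ℕ} (φ : memLang.BoundedFormula Empty n)
    (v : Fin n → S) : Prop :=
  φ.Realize (fun e => e.elim) v

/-- `r ∈ M` is a well-order of the set `x` (coded as a set of Kuratowski
pairs). -/
def IsWellOrderOn (r x : ZFSet) : Prop :=
  r ⊆ x.prod x ∧
    (∀ a ∈ x, ZFSet.pair a a ∉ r) ∧
    (∀ a ∈ x, ∀ b ∈ x, ∀ c ∈ x,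
      ZFSet.pair a b ∈ r → ZFSet.pair b c ∈ r → ZFSet.pair a c ∈ r) ∧
    (∀ a ∈ x, ∀ b ∈ x, a ≠ b → (ZFSet.pair a b ∈ r ∨ ZFSet.pair b a ∈ r)) ∧
    (∀ s : ZFSet, s ⊆ x → s.Nonempty → ∃ m ∈ s, ∀ z ∈ s, ZFSet.pair z m ∉ r)

/-- A transitive set `M` is a model of ZFC⁻ (ZFC without powerset, with the
collection scheme in place of replacement and the well-ordering principle in
place of choice). -/
structure IsZFCMinusModel (M : ZFSet) : Prop where
  transitive : M.IsTransitive
  empty_mem : (∅ : ZFSet) ∈ M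
  pair_mem : ∀ x ∈ M, ∀ y ∈ M, ({x, y} : ZFSet) ∈ M
  union_mem : ∀ x ∈ M, (ZFSet.sUnion x : ZFSet) ∈ M
  omega_mem : ZFSet.omega ∈ M
  separation : ∀ (n : ℕ) (φ : memLang.BoundedFormula Empty (n + 1))
    (v : Fin n → M.toSet), ∀ x ∈ M, ∃ s ∈ M, ∀ z : ZFSet,
      z ∈ s ↔ ∃ hz : z ∈ M, z ∈ x ∧ RealizeIn M.toSet φ (Fin.snoc v ⟨z, hz⟩)
  collection : ∀ (n : ℕ) (φ : memLang.BoundedFormula Empty (n + 2))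
    (v : Fin n → M.toSet), ∀ x ∈ M,
    (∀ z, ∀ hz : z ∈ M, z ∈ x → ∃ w, ∃ hw : w ∈ M,
      RealizeIn M.toSet φ (Fin.snoc (Fin.snoc v ⟨z, hz⟩) ⟨w, hw⟩)) →
    ∃ c ∈ M, ∀ z, ∀ hz : z ∈ M, z ∈ x → ∃ w, ∃ hw : w ∈ M, w ∈ c ∧
      RealizeIn M.toSet φ (Fin.snoc (Fin.snoc v ⟨z, hz⟩) ⟨w, hw⟩)
  wellOrdering : ∀ x ∈ M, ∃ r ∈ M, IsWellOrderOn r x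

/-- `f` is an injective function from `A` to `B`. -/
def FuncInj (f A B : ZFSet) : Prop :=
  ZFSet.IsFunc A B f ∧
    ∀ a ∈ A, ∀ a' ∈ A, ∀ b : ZFSet,
      ZFSet.pair a b ∈ f → ZFSet.pair a' b ∈ f → a = a'

/-- `f` is a bijection from `A` onto `B`. -/
def FuncBij (f A B : ZFSet) : Prop :=
  FuncInj f A B ∧ ∀ b ∈ B, ∃ a ∈ A, ZFSet.pair a b ∈ f

/-- `κ` is a cardinal in the model `Mdl`: an ordinal not surjected onto by any
smaller ordinal via a function in `Mdl`. -/
def IsCardinalIn (Mdl κ : ZFSet) : Prop :=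
  κ.IsOrdinal ∧ ∀ β ∈ κ, ∀ f ∈ Mdl, ZFSet.IsFunc β κ f →
    ∃ b ∈ κ, ∀ a ∈ β, ZFSet.pair a b ∉ f

namespace Scratch
open FirstOrder Language BoundedFormula

def mF {n : ℕ} (i j : Fin n) : memLang.BoundedFormula Empty n :=
  Relations.boundedFormula₂ PUnit.unit (Term.var (Sum.inr i)) (Term.var (Sum.inr j))

def eF {n : ℕ} (i j : Fin n) : memLang.BoundedFormula Empty n :=
  Term.bdEqual (Term.var (Sum.inr i)) (Term.var (Sum.inr j))

variable {S : Set ZFSet}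

@[simp] lemma realize_mF {n : ℕ} (i j : Fin n) (e : Empty → S) (v : Fin n → S) :
    (mF i j).Realize e v ↔ (v i : ZFSet) ∈ (v j : ZFSet) := by
  simp [mF, BoundedFormula.realize_rel₂, Structure.RelMap, Term.realize]
  exact Iff.rfl

@[simp] lemma realize_eF {n : ℕ} (i j : Fin n) (e : Empty → S) (v : Fin n → S) :
    (eF i j).Realize e v ↔ (v i : ZFSet) = (v j : ZFSet) := by
  simp [eF, BoundedFormula.realize_bdEqual, Term.realize, Subtype.ext_iff]

/-- `v i = {v j}` -/
def sngF {n : ℕ} (i j : Fin n) : memLang.BoundedFormula Empty n :=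
  mF j i ⊓ BoundedFormula.all ((mF (Fin.last n) i.castSucc).imp (eF (Fin.last n) j.castSucc))

/-- `v i = {v j, v k}` -/
def prF {n : ℕ} (i j k : Fin n) : memLang.BoundedFormula Empty n :=
  mF j i ⊓ mF k i ⊓ BoundedFormula.all ((mF (Fin.last n) i.castSucc).imp
    ((eF (Fin.last n) j.castSucc) ⊔ eF (Fin.last n) k.castSucc))

variable {M : ZFSet}

lemma realize_sngF (hT : M.IsTransitive) {n : ℕ} (i j : Fin n) (e : Empty → M.toSet)
    (v : Fin n → M.toSet) :
    (sngF i j).Realize e v ↔ (v i : ZFSet) = {(v j : ZFSet)} := by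
  simp only [sngF, realize_inf, realize_all, realize_imp, realize_mF, realize_eF,
    Fin.snoc_last, Fin.snoc_castSucc]
  constructor
  · rintro ⟨h1, h2⟩
    ext z
    simp only [ZFSet.mem_singleton]
    constructor
    · intro hz
      exact h2 ⟨z, hT.mem_trans hz (v i).2⟩ hz
    · rintro rfl; exact h1
  · intro h
    rw [h]
    exact ⟨ZFSet.mem_singleton.2 rfl, fun a ha => ZFSet.mem_singleton.1 ha⟩

lemma realize_prF (hT : M.IsTransitive) {n : ℕ} (i j k : Fin n) (e : Empty → M.toSet)
    (v : Fin n → M.toSet) :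
    (prF i j k).Realize e v ↔ (v i : ZFSet) = {(v j : ZFSet), (v k : ZFSet)} := by
  simp only [prF, realize_inf, realize_all, realize_imp, realize_sup, realize_mF, realize_eF,
    Fin.snoc_last, Fin.snoc_castSucc]
  constructor
  · rintro ⟨⟨h1, h2⟩, h3⟩
    ext z
    simp only [ZFSet.mem_pair]
    constructor
    · intro hz
      exact h3 ⟨z, hT.mem_trans hz (v i).2⟩ hz
    · rintro (rfl | rfl); exacts [h1, h2]
  · intro h
    rw [h]
    exact ⟨⟨ZFSet.mem_pair.2 (Or.inl rfl), ZFSet.mem_pair.2 (Or.inr rfl)⟩,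
      fun a ha => ZFSet.mem_pair.1 ha⟩


/-- `v i = pair (v j) (v k)` -/
def pairF {n : ℕ} (i j k : Fin n) : memLang.BoundedFormula Empty n :=
  ((sngF ((Fin.last n).castSucc) j.castSucc.castSucc ⊓
    prF (Fin.last (n+1)) j.castSucc.castSucc k.castSucc.castSucc ⊓
    mF ((Fin.last n).castSucc) i.castSucc.castSucc ⊓
    mF (Fin.last (n+1)) i.castSucc.castSucc ⊓
    BoundedFormula.all ((mF (Fin.last (n+2)) i.castSucc.castSucc.castSucc).imp
      ((eF (Fin.last (n+2)) ((Fin.last n).castSucc.castSucc)) ⊔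
        eF (Fin.last (n+2)) ((Fin.last (n+1)).castSucc)))).ex).ex

lemma mem_pair_iff {x y z : ZFSet} :
    z ∈ ZFSet.pair x y ↔ z = {x} ∨ z = {x, y} := by
  simp [ZFSet.pair, ZFSet.mem_pair]

lemma realize_pairF (hT : M.IsTransitive) {n : ℕ} (i j k : Fin n) (e : Empty → M.toSet)
    (v : Fin n → M.toSet) :
    (pairF i j k).Realize e v ↔ (v i : ZFSet) = ZFSet.pair (v j) (v k) := by
  simp only [pairF, realize_ex, realize_inf, realize_all, realize_imp, realize_sup,
    realize_mF, realize_eF, realize_sngF hT, realize_prF hT,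
    Fin.snoc_last, Fin.snoc_castSucc]
  constructor
  · rintro ⟨s, t, ⟨⟨⟨⟨hs, ht⟩, hsi⟩, hti⟩, hq⟩⟩
    ext z
    rw [mem_pair_iff]
    constructor
    · intro hz
      rcases hq ⟨z, hT.mem_trans hz (v i).2⟩ hz with h | h
      · exact Or.inl (h.trans hs)
      · exact Or.inr (h.trans ht)
    · rintro (rfl | rfl)
      · rwa [← hs]
      · rwa [← ht]
  · intro h
    have h1 : ({(v j : ZFSet)} : ZFSet) ∈ (v i : ZFSet) := by
      rw [h]; exact mem_pair_iff.2 (Or.inl rfl)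
    have h2 : ({(v j : ZFSet), (v k : ZFSet)} : ZFSet) ∈ (v i : ZFSet) := by
      rw [h]; exact mem_pair_iff.2 (Or.inr rfl)
    refine ⟨⟨_, hT.mem_trans h1 (v i).2⟩, ⟨_, hT.mem_trans h2 (v i).2⟩,
      ⟨⟨⟨⟨rfl, rfl⟩, h1⟩, h2⟩, ?_⟩⟩
    intro q hq
    have := hq
    rw [h] at this
    exact mem_pair_iff.1 this

/-- `pair (v j) (v k) ∈ v i` -/
def memPairF {n : ℕ} (i j k : Fin n) : memLang.BoundedFormula Empty n :=
  (mF (Fin.last n) i.castSucc ⊓ pairF (Fin.last n) j.castSucc k.castSucc).ex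

lemma realize_memPairF (hT : M.IsTransitive) {n : ℕ} (i j k : Fin n) (e : Empty → M.toSet)
    (v : Fin n → M.toSet) :
    (memPairF i j k).Realize e v ↔ ZFSet.pair (v j) (v k) ∈ (v i : ZFSet) := by
  simp only [memPairF, realize_ex, realize_inf, realize_mF, realize_pairF hT,
    Fin.snoc_last, Fin.snoc_castSucc]
  constructor
  · rintro ⟨p, hp, hpe⟩
    exact hpe ▸ hp
  · intro h
    exact ⟨⟨_, hT.mem_trans h (v i).2⟩, h, rfl⟩


lemma singleton_mem_model (hM : IsZFCMinusModel M) {a : ZFSet} (ha : a ∈ M) :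
    ({a} : ZFSet) ∈ M := by
  have := hM.pair_mem a ha a ha
  have e : ({a, a} : ZFSet) = {a} := by
    ext z; simp [ZFSet.mem_pair]
  rwa [e] at this

lemma pair_mem_model (hM : IsZFCMinusModel M) {a b : ZFSet} (ha : a ∈ M) (hb : b ∈ M) :
    ZFSet.pair a b ∈ M := by
  have h1 := singleton_mem_model hM ha
  have h2 := hM.pair_mem a ha b hb
  exact hM.pair_mem _ h1 _ h2

lemma exists_pairSup (hM : IsZFCMinusModel M) {x y : ZFSet} (hx : x ∈ M) (hy : y ∈ M) :
    ∃ w ∈ M, ∀ a ∈ x, ∀ b ∈ y, ZFSet.pair a b ∈ w := by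
  have hT := hM.transitive
  have inner : ∀ a, a ∈ M → ∃ c ∈ M, ∀ b ∈ y, ZFSet.pair a b ∈ c := by
    intro a ha
    obtain ⟨c, hc, hcy⟩ := hM.collection 1
      (pairF (Fin.last 2) (((0 : Fin 1).castSucc).castSucc) ((Fin.last 1).castSucc))
      ![⟨a, ha⟩] y hy (by
        intro z hz hzy
        refine ⟨ZFSet.pair a z, pair_mem_model hM ha hz, ?_⟩
        rw [RealizeIn, realize_pairF hT]
        simp [Fin.snoc])
    refine ⟨c, hc, fun b hb => ?_⟩
    have hbM : b ∈ M := hT.mem_trans hb hy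
    obtain ⟨w, hw, hwc, hr⟩ := hcy b hbM hb
    rw [RealizeIn, realize_pairF hT] at hr
    simp [Fin.snoc] at hr
    rwa [hr] at hwc
  obtain ⟨C, hC, hCx⟩ := hM.collection 1
    (BoundedFormula.all ((mF (Fin.last 3) ((((0 : Fin 1).castSucc).castSucc).castSucc)).imp
      (memPairF ((Fin.last 2).castSucc) (((Fin.last 1).castSucc).castSucc) (Fin.last 3))))
    ![⟨y, hy⟩] x hx (by
      intro a ha hax
      obtain ⟨c, hc, hcy⟩ := inner a ha
      refine ⟨c, hc, ?_⟩
      rw [RealizeIn]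
      rw [BoundedFormula.realize_all]
      intro b
      rw [BoundedFormula.realize_imp, realize_mF, realize_memPairF hT]
      simp only [Fin.snoc_last, Fin.snoc_castSucc, Matrix.cons_val_fin_one]
      exact fun hb => hcy b hb)
  refine ⟨ZFSet.sUnion C, hM.union_mem C hC, fun a ha b hb => ?_⟩
  have haM : a ∈ M := hT.mem_trans ha hx
  obtain ⟨w, hwM, hwC, hr⟩ := hCx a haM ha
  rw [RealizeIn, BoundedFormula.realize_all] at hr
  have := hr ⟨b, hT.mem_trans hb hy⟩
  rw [BoundedFormula.realize_imp, realize_mF, realize_memPairF hT] at this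
  simp only [Fin.snoc_last, Fin.snoc_castSucc, Matrix.cons_val_fin_one] at this
  exact ZFSet.mem_sUnion.2 ⟨w, hwC, this hb⟩


lemma exists_rng (hM : IsZFCMinusModel M) {k h : ZFSet} (hk : k ∈ M) (hh : h ∈ M) :
    ∃ s ∈ M, ∀ z, z ∈ s ↔ z ∈ k ∧ ∃ a ∈ M, ZFSet.pair a z ∈ h := by
  have hT := hM.transitive
  obtain ⟨s, hs, hsc⟩ := hM.separation 1
    (BoundedFormula.ex (memPairF (((0 : Fin 1).castSucc).castSucc) (Fin.last 2)
      ((Fin.last 1).castSucc)))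
    ![⟨h, hh⟩] k hk
  refine ⟨s, hs, fun z => ?_⟩
  rw [hsc z]
  constructor
  · rintro ⟨hz, hzk, hr⟩
    rw [RealizeIn, BoundedFormula.realize_ex] at hr
    obtain ⟨a, hra⟩ := hr
    rw [realize_memPairF hT] at hra
    simp only [Fin.snoc_last, Fin.snoc_castSucc, Matrix.cons_val_fin_one] at hra
    exact ⟨hzk, a, a.2, hra⟩
  · rintro ⟨hzk, a, haM, hpa⟩
    refine ⟨hT.mem_trans hzk hk, hzk, ?_⟩
    rw [RealizeIn, BoundedFormula.realize_ex]
    refine ⟨⟨a, haM⟩, ?_⟩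
    rw [realize_memPairF hT]
    simpa only [Fin.snoc_last, Fin.snoc_castSucc, Matrix.cons_val_fin_one] using hpa

lemma exists_rngColl (hM : IsZFCMinusModel M) {k F : ZFSet} (hk : k ∈ M) (hF : F ∈ M) :
    ∃ c ∈ M, ∀ h ∈ F, ∃ w ∈ c, ∀ b, b ∈ w ↔ b ∈ k ∧ ∃ a ∈ M, ZFSet.pair a b ∈ h := by
  have hT := hM.transitive
  obtain ⟨c, hc, hcF⟩ := hM.collection 1
    (BoundedFormula.all ((mF (Fin.last 3) ((Fin.last 2).castSucc)).iff
      ((mF (Fin.last 3) ((((0 : Fin 1).castSucc).castSucc).castSucc)) ⊓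
        BoundedFormula.ex (memPairF ((((Fin.last 1).castSucc).castSucc).castSucc)
          (Fin.last 4) ((Fin.last 3).castSucc)))))
    ![⟨k, hk⟩] F hF (by
      intro h hhM hhF
      obtain ⟨s, hsM, hsc⟩ := exists_rng hM hk hhM
      refine ⟨s, hsM, ?_⟩
      rw [RealizeIn, BoundedFormula.realize_all]
      intro b
      rw [BoundedFormula.realize_iff, BoundedFormula.realize_inf,
        BoundedFormula.realize_ex, realize_mF, realize_mF]
      simp only [Fin.snoc_last, Fin.snoc_castSucc, Matrix.cons_val_fin_one]
      rw [hsc b]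
      constructor
      · rintro ⟨hbk, a, haM, hab⟩
        refine ⟨hbk, ⟨a, haM⟩, ?_⟩
        rw [realize_memPairF hT]
        simpa only [Fin.snoc_last, Fin.snoc_castSucc, Matrix.cons_val_fin_one] using hab
      · rintro ⟨hbk, a, hab⟩
        rw [realize_memPairF hT] at hab
        simp only [Fin.snoc_last, Fin.snoc_castSucc, Matrix.cons_val_fin_one] at hab
        exact ⟨hbk, a, a.2, hab⟩)
  refine ⟨c, hc, fun h hhF => ?_⟩
  have hhM : h ∈ M := hT.mem_trans hhF hF
  obtain ⟨w, hwM, hwc, hr⟩ := hcF h hhM hhF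
  refine ⟨w, hwc, fun b => ?_⟩
  rw [RealizeIn, BoundedFormula.realize_all] at hr
  constructor
  · intro hbw
    have hbM : b ∈ M := hT.mem_trans hbw hwM
    have := hr ⟨b, hbM⟩
    rw [BoundedFormula.realize_iff, BoundedFormula.realize_inf,
      BoundedFormula.realize_ex, realize_mF, realize_mF] at this
    simp only [Fin.snoc_last, Fin.snoc_castSucc, Matrix.cons_val_fin_one] at this
    obtain ⟨hbk, a, hab⟩ := this.1 hbw
    rw [realize_memPairF hT] at hab
    simp only [Fin.snoc_last, Fin.snoc_castSucc, Matrix.cons_val_fin_one] at hab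
    exact ⟨hbk, a, a.2, hab⟩
  · rintro ⟨hbk, a, haM, hab⟩
    have hbM : b ∈ M := hT.mem_trans hbk hk
    have := hr ⟨b, hbM⟩
    rw [BoundedFormula.realize_iff, BoundedFormula.realize_inf,
      BoundedFormula.realize_ex, realize_mF, realize_mF] at this
    simp only [Fin.snoc_last, Fin.snoc_castSucc, Matrix.cons_val_fin_one] at this
    refine this.2 ⟨hbk, ⟨a, haM⟩, ?_⟩
    rw [realize_memPairF hT]
    simpa only [Fin.snoc_last, Fin.snoc_castSucc, Matrix.cons_val_fin_one] using hab


lemma exists_S0 (hM : IsZFCMinusModel M) {k F c : ZFSet} (hk : k ∈ M) (hF : F ∈ M)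
    (hc : c ∈ M) :
    ∃ S0 ∈ M, ∀ z, z ∈ S0 ↔ z ∈ c ∧ ∃ h ∈ M, h ∈ F ∧
      ∀ b ∈ M, (b ∈ z ↔ b ∈ k ∧ ∃ a ∈ M, ZFSet.pair a b ∈ h) := by
  have hT := hM.transitive
  obtain ⟨S0, hS0, hch⟩ := hM.separation 2
    (BoundedFormula.ex ((mF (Fin.last 3) (((1 : Fin 2).castSucc).castSucc)) ⊓
      BoundedFormula.all ((mF (Fin.last 4) (((Fin.last 2).castSucc).castSucc)).iff
        ((mF (Fin.last 4) ((((0 : Fin 2).castSucc).castSucc).castSucc)) ⊓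
          BoundedFormula.ex (memPairF (((Fin.last 3).castSucc).castSucc)
            (Fin.last 5) ((Fin.last 4).castSucc))))))
    ![⟨k, hk⟩, ⟨F, hF⟩] c hc
  refine ⟨S0, hS0, fun z => ?_⟩
  rw [hch z]
  constructor
  · rintro ⟨hzM, hzc, hr⟩
    rw [RealizeIn, BoundedFormula.realize_ex] at hr
    obtain ⟨h, hr⟩ := hr
    rw [BoundedFormula.realize_inf, realize_mF, BoundedFormula.realize_all] at hr
    simp only [Fin.snoc_last, Fin.snoc_castSucc, Matrix.cons_val_one,
      Matrix.cons_val_zero, Matrix.head_cons] at hr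
    refine ⟨hzc, h, h.2, hr.1, fun b hbM => ?_⟩
    have := hr.2 ⟨b, hbM⟩
    rw [BoundedFormula.realize_iff, BoundedFormula.realize_inf,
      BoundedFormula.realize_ex, realize_mF, realize_mF] at this
    simp only [Fin.snoc_last, Fin.snoc_castSucc, Matrix.cons_val_one,
      Matrix.cons_val_zero, Matrix.head_cons] at this
    rw [this]
    constructor
    · rintro ⟨hbk, a, hab⟩
      rw [realize_memPairF hT] at hab
      simp only [Fin.snoc_last, Fin.snoc_castSucc] at hab
      exact ⟨hbk, a, a.2, hab⟩
    · rintro ⟨hbk, a, haM, hab⟩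
      refine ⟨hbk, ⟨a, haM⟩, ?_⟩
      rw [realize_memPairF hT]
      simpa only [Fin.snoc_last, Fin.snoc_castSucc] using hab
  · rintro ⟨hzc, h, hhM, hhF, hb⟩
    refine ⟨hT.mem_trans hzc hc, hzc, ?_⟩
    rw [RealizeIn, BoundedFormula.realize_ex]
    refine ⟨⟨h, hhM⟩, ?_⟩
    rw [BoundedFormula.realize_inf, realize_mF, BoundedFormula.realize_all]
    simp only [Fin.snoc_last, Fin.snoc_castSucc, Matrix.cons_val_one,
      Matrix.cons_val_zero, Matrix.head_cons]
    refine ⟨hhF, fun b => ?_⟩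
    rw [BoundedFormula.realize_iff, BoundedFormula.realize_inf,
      BoundedFormula.realize_ex, realize_mF, realize_mF]
    simp only [Fin.snoc_last, Fin.snoc_castSucc, Matrix.cons_val_one,
      Matrix.cons_val_zero, Matrix.head_cons]
    rw [hb b b.2]
    constructor
    · rintro ⟨hbk, a, haM, hab⟩
      refine ⟨hbk, ⟨a, haM⟩, ?_⟩
      rw [realize_memPairF hT]
      simpa only [Fin.snoc_last, Fin.snoc_castSucc] using hab
    · rintro ⟨hbk, a, hab⟩
      rw [realize_memPairF hT] at hab
      simp only [Fin.snoc_last, Fin.snoc_castSucc] at hab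
      exact ⟨hbk, a, a.2, hab⟩

lemma exists_inv (hM : IsZFCMinusModel M) {h r w : ZFSet} (hh : h ∈ M) (hr : r ∈ M)
    (hw : w ∈ M) :
    ∃ f ∈ M, ∀ z, z ∈ f ↔ z ∈ w ∧ ∃ b ∈ M, ∃ a ∈ M, z = ZFSet.pair b a ∧
      ZFSet.pair a b ∈ h ∧ ∀ a' ∈ M, ZFSet.pair a' a ∈ r → ZFSet.pair a' b ∉ h := by
  have hT := hM.transitive
  obtain ⟨f, hf, hch⟩ := hM.separation 2
    (BoundedFormula.ex (BoundedFormula.ex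
      (pairF (((Fin.last 2).castSucc).castSucc) ((Fin.last 3).castSucc) (Fin.last 4) ⊓
       memPairF ((((0 : Fin 2).castSucc).castSucc).castSucc) (Fin.last 4)
         ((Fin.last 3).castSucc) ⊓
       BoundedFormula.all ((memPairF (((((1 : Fin 2).castSucc).castSucc).castSucc).castSucc)
           (Fin.last 5) ((Fin.last 4).castSucc)).imp
         ((memPairF (((((0 : Fin 2).castSucc).castSucc).castSucc).castSucc)
           (Fin.last 5) (((Fin.last 3).castSucc).castSucc)).not)))))
    ![⟨h, hh⟩, ⟨r, hr⟩] w hw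
  refine ⟨f, hf, fun z => ?_⟩
  rw [hch z]
  constructor
  · rintro ⟨hzM, hzw, hrr⟩
    rw [RealizeIn, BoundedFormula.realize_ex] at hrr
    obtain ⟨b, hrr⟩ := hrr
    rw [BoundedFormula.realize_ex] at hrr
    obtain ⟨a, hrr⟩ := hrr
    rw [BoundedFormula.realize_inf, BoundedFormula.realize_inf, realize_pairF hT,
      realize_memPairF hT, BoundedFormula.realize_all] at hrr
    simp only [Fin.snoc_last, Fin.snoc_castSucc, Matrix.cons_val_one,
      Matrix.cons_val_zero, Matrix.head_cons] at hrr
    refine ⟨hzw, b, b.2, a, a.2, hrr.1.1, hrr.1.2, fun a' ha'M ha'r ha'h => ?_⟩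
    have := hrr.2 ⟨a', ha'M⟩
    rw [BoundedFormula.realize_imp, BoundedFormula.realize_not,
      realize_memPairF hT, realize_memPairF hT] at this
    simp only [Fin.snoc_last, Fin.snoc_castSucc, Matrix.cons_val_one,
      Matrix.cons_val_zero, Matrix.head_cons] at this
    exact this ha'r ha'h
  · rintro ⟨hzw, b, hbM, a, haM, hzp, hab, hmin⟩
    refine ⟨hT.mem_trans hzw hw, hzw, ?_⟩
    rw [RealizeIn, BoundedFormula.realize_ex]
    refine ⟨⟨b, hbM⟩, ?_⟩
    rw [BoundedFormula.realize_ex]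
    refine ⟨⟨a, haM⟩, ?_⟩
    rw [BoundedFormula.realize_inf, BoundedFormula.realize_inf, realize_pairF hT,
      realize_memPairF hT, BoundedFormula.realize_all]
    simp only [Fin.snoc_last, Fin.snoc_castSucc, Matrix.cons_val_one,
      Matrix.cons_val_zero, Matrix.head_cons]
    refine ⟨⟨hzp, hab⟩, fun a' => ?_⟩
    rw [BoundedFormula.realize_imp, BoundedFormula.realize_not,
      realize_memPairF hT, realize_memPairF hT]
    simp only [Fin.snoc_last, Fin.snoc_castSucc, Matrix.cons_val_one,
      Matrix.cons_val_zero, Matrix.head_cons]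
    exact hmin a' a'.2

lemma exists_ext (hM : IsZFCMinusModel M) {g f a0 w : ZFSet} (hg : g ∈ M) (hf : f ∈ M)
    (ha0 : a0 ∈ M) (hw : w ∈ M) :
    ∃ h ∈ M, ∀ z, z ∈ h ↔ z ∈ w ∧ ∃ a ∈ M, ∃ b ∈ M, z = ZFSet.pair a b ∧ a ∈ g ∧
      (ZFSet.pair b a ∈ f ∨ (b = a0 ∧ ∀ b' ∈ M, ZFSet.pair b' a ∉ f)) := by
  have hT := hM.transitive
  obtain ⟨h, hh, hch⟩ := hM.separation 3
    (BoundedFormula.ex (BoundedFormula.ex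
      (pairF (((Fin.last 3).castSucc).castSucc) ((Fin.last 4).castSucc) (Fin.last 5) ⊓
       mF ((Fin.last 4).castSucc) ((((0 : Fin 3).castSucc).castSucc).castSucc) ⊓
       ((memPairF ((((1 : Fin 3).castSucc).castSucc).castSucc) (Fin.last 5)
          ((Fin.last 4).castSucc)) ⊔
        ((eF (Fin.last 5) ((((2 : Fin 3).castSucc).castSucc).castSucc)) ⊓
         BoundedFormula.all ((memPairF (((((1 : Fin 3).castSucc).castSucc).castSucc).castSucc)
           (Fin.last 6) (((Fin.last 4).castSucc).castSucc)).not))))))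
    ![⟨g, hg⟩, ⟨f, hf⟩, ⟨a0, ha0⟩] w hw
  refine ⟨h, hh, fun z => ?_⟩
  rw [hch z]
  constructor
  · rintro ⟨hzM, hzw, hrr⟩
    rw [RealizeIn, BoundedFormula.realize_ex] at hrr
    obtain ⟨a, hrr⟩ := hrr
    rw [BoundedFormula.realize_ex] at hrr
    obtain ⟨b, hrr⟩ := hrr
    rw [BoundedFormula.realize_inf, BoundedFormula.realize_inf, realize_pairF hT,
      realize_mF, BoundedFormula.realize_sup, realize_memPairF hT,
      BoundedFormula.realize_inf, realize_eF, BoundedFormula.realize_all] at hrr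
    simp only [Fin.snoc_last, Fin.snoc_castSucc, Matrix.cons_val_one,
      Matrix.cons_val_zero, Matrix.head_cons, Matrix.cons_val_two, Matrix.tail_cons] at hrr
    refine ⟨hzw, a, a.2, b, b.2, hrr.1.1, hrr.1.2, ?_⟩
    rcases hrr.2 with h1 | ⟨h1, h2⟩
    · exact Or.inl h1
    · refine Or.inr ⟨h1, fun b' hb'M hb'f => ?_⟩
      have := h2 ⟨b', hb'M⟩
      rw [BoundedFormula.realize_not, realize_memPairF hT] at this
      simp only [Fin.snoc_last, Fin.snoc_castSucc, Matrix.cons_val_one,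
        Matrix.cons_val_zero, Matrix.head_cons] at this
      exact this hb'f
  · rintro ⟨hzw, a, haM, b, hbM, hzp, hag, hcase⟩
    refine ⟨hT.mem_trans hzw hw, hzw, ?_⟩
    rw [RealizeIn, BoundedFormula.realize_ex]
    refine ⟨⟨a, haM⟩, ?_⟩
    rw [BoundedFormula.realize_ex]
    refine ⟨⟨b, hbM⟩, ?_⟩
    rw [BoundedFormula.realize_inf, BoundedFormula.realize_inf, realize_pairF hT,
      realize_mF, BoundedFormula.realize_sup, realize_memPairF hT,
      BoundedFormula.realize_inf, realize_eF, BoundedFormula.realize_all]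
    simp only [Fin.snoc_last, Fin.snoc_castSucc, Matrix.cons_val_one,
      Matrix.cons_val_zero, Matrix.head_cons, Matrix.cons_val_two, Matrix.tail_cons]
    refine ⟨⟨hzp, hag⟩, ?_⟩
    rcases hcase with h1 | ⟨h1, h2⟩
    · exact Or.inl h1
    · refine Or.inr ⟨h1, fun b' => ?_⟩
      rw [BoundedFormula.realize_not, realize_memPairF hT]
      simp only [Fin.snoc_last, Fin.snoc_castSucc, Matrix.cons_val_one,
        Matrix.cons_val_zero, Matrix.head_cons]
      exact h2 b' b'.2

end Scratch

open Scratch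

/-- Let `M` be a transitive model of ZFC⁻ whose largest cardinal is `κ`, and
let `P ∈ M` be a poset with `|P|^M = γ`, where `κ^γ = κ` holds in `M` (i.e.
the set `F` of functions `γ → κ` of `M` exists in `M` and is in bijection with
`κ` via a function of `M`).  Then the collection `P_{γ⁺}(κ)^M` of subsets of
`κ` in `M` of `M`-size at most `γ` is an element of `M`. -/
theorem small_subsets_set_in_model (δ : ZFSet) (M : ZFSet)
    (hM : IsZFCMinusModel M)
    (κ : ZFSet) (hκM : κ ∈ M) (hκcard : IsCardinalIn M κ)
    (hκlargest : ∀ lam ∈ M, IsCardinalIn M lam → lam ⊆ κ)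
    (P : ZFSet) (hPM : P ∈ M)
    (γ : ZFSet) (hγM : γ ∈ M) (hγcard : IsCardinalIn M γ)
    (hPγ : ∃ f ∈ M, FuncBij f P γ)
    (hexp : ∃ F ∈ M, (∀ h : ZFSet, h ∈ F ↔ h ∈ M ∧ ZFSet.IsFunc γ κ h) ∧
      ∃ b ∈ M, FuncBij b F κ) :
    ∃ S ∈ M, ∀ A : ZFSet,
      A ∈ S ↔ (A ∈ M ∧ A ⊆ κ ∧ ∃ f ∈ M, FuncInj f A γ) := by
  classical
  obtain ⟨F, hFM, hFchar, -⟩ := hexp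
  have hT := hM.transitive
  obtain ⟨c, hcM, hcprop⟩ := exists_rngColl hM hκM hFM
  obtain ⟨S0, hS0M, hS0char⟩ := exists_S0 hM hκM hFM hcM
  have hemptyM := hM.empty_mem
  have hsng : ({(∅ : ZFSet)} : ZFSet) ∈ M := singleton_mem_model hM hemptyM
  have hpairS : ({S0, {∅}} : ZFSet) ∈ M := hM.pair_mem _ hS0M _ hsng
  refine ⟨ZFSet.sUnion ({S0, {∅}} : ZFSet), hM.union_mem _ hpairS, fun A => ?_⟩
  have hmemS : A ∈ (ZFSet.sUnion ({S0, {∅}} : ZFSet) : ZFSet) ↔ A ∈ S0 ∨ A = ∅ := by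
    rw [ZFSet.mem_sUnion]
    constructor
    · rintro ⟨t, ht, hA⟩
      rcases ZFSet.mem_pair.1 ht with rfl | rfl
      · exact Or.inl hA
      · exact Or.inr (ZFSet.mem_singleton.1 hA)
    · rintro (h | rfl)
      · exact ⟨S0, ZFSet.mem_pair.2 (Or.inl rfl), h⟩
      · exact ⟨{∅}, ZFSet.mem_pair.2 (Or.inr rfl), ZFSet.mem_singleton.2 rfl⟩
  rw [hmemS]
  obtain ⟨w, hwM, hwprop⟩ := exists_pairSup hM hκM hγM
  obtain ⟨w2, hw2M, hw2prop⟩ := exists_pairSup hM hγM hκM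
  constructor
  · rintro (hA | rfl)
    · obtain ⟨hAc, h, hhM, hhF, hchar⟩ := (hS0char A).1 hA
      have hAM : A ∈ M := hT.mem_trans hAc hcM
      have hhFunc : ZFSet.IsFunc γ κ h := ((hFchar h).1 hhF).2
      have hAκ : A ⊆ κ := fun b hb => ((hchar b (hT.mem_trans hb hAM)).1 hb).1
      refine ⟨hAM, hAκ, ?_⟩
      obtain ⟨r, hrM, hrwo⟩ := hM.wellOrdering γ hγM
      obtain ⟨f, hfM, hfchar⟩ := exists_inv hM hhM hrM hwM
      refine ⟨f, hfM, ⟨?_, ?_⟩, ?_⟩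
      · intro z hz
        obtain ⟨hzw, b, hbM, a, haM, hze, hab, -⟩ := (hfchar z).1 hz
        have hapair := ZFSet.pair_mem_prod.1 (hhFunc.1 hab)
        have hbA : b ∈ A := (hchar b hbM).2 ⟨hapair.2, a, haM, hab⟩
        rw [hze]
        exact ZFSet.pair_mem_prod.2 ⟨hbA, hapair.1⟩
      · intro b hbA
        have hbM : b ∈ M := hT.mem_trans hbA hAM
        obtain ⟨hbκ, a1, ha1M, ha1h⟩ := (hchar b hbM).1 hbA
        have hSsub : ZFSet.sep (fun a => ZFSet.pair a b ∈ h) γ ⊆ γ :=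
          fun z hz => (ZFSet.mem_sep.1 hz).1
        have ha1γ : a1 ∈ γ := (ZFSet.pair_mem_prod.1 (hhFunc.1 ha1h)).1
        obtain ⟨m, hmS, hmmin⟩ := hrwo.2.2.2.2 _ hSsub
          ⟨a1, ZFSet.mem_sep.2 ⟨ha1γ, ha1h⟩⟩
        have hmγ : m ∈ γ := hSsub hmS
        have hmh : ZFSet.pair m b ∈ h := (ZFSet.mem_sep.1 hmS).2
        have hmM : m ∈ M := hT.mem_trans hmγ hγM
        have hpf : ZFSet.pair b m ∈ f := by
          refine (hfchar _).2 ⟨hwprop b hbκ m hmγ, b, hbM, m, hmM, rfl, hmh, ?_⟩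
          intro a' ha'M ha'r ha'h
          have ha'γ : a' ∈ γ := (ZFSet.pair_mem_prod.1 (hhFunc.1 ha'h)).1
          exact hmmin a' (ZFSet.mem_sep.2 ⟨ha'γ, ha'h⟩) ha'r
        refine ⟨m, hpf, ?_⟩
        intro a2 hpa2
        obtain ⟨-, b2, hb2M, m2, hm2M, heq, hm2h, hmin2⟩ := (hfchar _).1 hpa2
        obtain ⟨hb2, hm2⟩ := ZFSet.pair_inj.1 heq
        subst hb2; subst hm2
        by_contra hne
        have ha2γ : a2 ∈ γ := (ZFSet.pair_mem_prod.1 (hhFunc.1 hm2h)).1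
        rcases hrwo.2.2.2.1 a2 ha2γ m hmγ hne with hmem | hmem
        · exact hmmin a2 (ZFSet.mem_sep.2 ⟨ha2γ, hm2h⟩) hmem
        · exact hmin2 m hmM hmem hmh
      · intro x hxA x' hx'A y hxy hx'y
        obtain ⟨-, b1, -, a1, -, he1, hh1, -⟩ := (hfchar _).1 hxy
        obtain ⟨hb1, ha1⟩ := ZFSet.pair_inj.1 he1
        subst hb1; subst ha1
        obtain ⟨-, b2, -, a2, -, he2, hh2, -⟩ := (hfchar _).1 hx'y
        obtain ⟨hb2, ha2⟩ := ZFSet.pair_inj.1 he2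
        subst hb2; subst ha2
        have hyγ : y ∈ γ := (ZFSet.pair_mem_prod.1 (hhFunc.1 hh1)).1
        obtain ⟨u, -, huniq⟩ := hhFunc.2 y hyγ
        exact (huniq x hh1).trans (huniq x' hh2).symm
    · refine ⟨hemptyM, fun z hz => absurd hz (ZFSet.notMem_empty z), ∅, hemptyM,
        ⟨⟨fun z hz => absurd hz (ZFSet.notMem_empty z),
          fun z hz => absurd hz (ZFSet.notMem_empty z)⟩,
         fun a ha => absurd ha (ZFSet.notMem_empty a)⟩⟩
  · rintro ⟨hAM, hAκ, f, hfM, hfinj⟩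
    by_cases hA : A = ∅
    · exact Or.inr hA
    left
    obtain ⟨a0, ha0A⟩ : ∃ a0, a0 ∈ A := by
      by_contra hno
      push_neg at hno
      exact hA ((ZFSet.eq_empty A).2 hno)
    have ha0M : a0 ∈ M := hT.mem_trans ha0A hAM
    obtain ⟨h, hhM, hhchar⟩ := exists_ext hM hγM hfM ha0M hw2M
    have hfprod := hfinj.1.1
    have hIsFunc : ZFSet.IsFunc γ κ h := by
      constructor
      · intro z hz
        obtain ⟨-, a, -, b, -, hze, hag, hcase⟩ := (hhchar z).1 hz
        have hbκ : b ∈ κ := by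
          rcases hcase with h1 | ⟨hb0, -⟩
          · exact hAκ (ZFSet.pair_mem_prod.1 (hfprod h1)).1
          · rw [hb0]; exact hAκ ha0A
        rw [hze]
        exact ZFSet.pair_mem_prod.2 ⟨hag, hbκ⟩
      · intro a haγ
        have haM : a ∈ M := hT.mem_trans haγ hγM
        by_cases hpre : ∃ b, ZFSet.pair b a ∈ f
        · obtain ⟨b, hbf⟩ := hpre
          have hbA : b ∈ A := (ZFSet.pair_mem_prod.1 (hfprod hbf)).1
          have hbM : b ∈ M := hT.mem_trans hbA hAM
          refine ⟨b, (hhchar _).2 ⟨hw2prop a haγ b (hAκ hbA), a, haM, b, hbM, rfl,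
            haγ, Or.inl hbf⟩, ?_⟩
          intro b2 hb2h
          obtain ⟨-, a2, -, b2', -, heq, -, hcase2⟩ := (hhchar _).1 hb2h
          obtain ⟨ha2, hb2'⟩ := ZFSet.pair_inj.1 heq
          subst ha2; subst hb2'
          rcases hcase2 with h1 | ⟨hb0, hno⟩
          · have hb2A : b2 ∈ A := (ZFSet.pair_mem_prod.1 (hfprod h1)).1
            exact hfinj.2 b2 hb2A b hbA a h1 hbf
          · exact absurd hbf (hno b hbM)
        · push_neg at hpre
          refine ⟨a0, (hhchar _).2 ⟨hw2prop a haγ a0 (hAκ ha0A), a, haM, a0, ha0M, rfl,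
            haγ, Or.inr ⟨rfl, fun b' _ => hpre b'⟩⟩, ?_⟩
          intro b2 hb2h
          obtain ⟨-, a2, -, b2', -, heq, -, hcase2⟩ := (hhchar _).1 hb2h
          obtain ⟨ha2, hb2'⟩ := ZFSet.pair_inj.1 heq
          subst ha2; subst hb2'
          rcases hcase2 with h1 | ⟨hb0, -⟩
          · exact absurd h1 (hpre b2)
          · exact hb0
    have hhF : h ∈ F := (hFchar h).2 ⟨hhM, hIsFunc⟩
    have hrngA : ∀ b, (b ∈ κ ∧ ∃ a ∈ M, ZFSet.pair a b ∈ h) ↔ b ∈ A := by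
      intro b
      constructor
      · rintro ⟨hbκ, a, haM, hab⟩
        obtain ⟨-, a2, -, b2, -, heq, -, hcase⟩ := (hhchar _).1 hab
        obtain ⟨ha2, hb2⟩ := ZFSet.pair_inj.1 heq
        subst ha2; subst hb2
        rcases hcase with h1 | ⟨hb0, -⟩
        · exact (ZFSet.pair_mem_prod.1 (hfprod h1)).1
        · rw [hb0]; exact ha0A
      · intro hbA
        refine ⟨hAκ hbA, ?_⟩
        obtain ⟨a, haf, -⟩ := hfinj.1.2 b hbA
        have haγ : a ∈ γ := (ZFSet.pair_mem_prod.1 (hfprod haf)).2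
        have haM := hT.mem_trans haγ hγM
        have hbM := hT.mem_trans hbA hAM
        exact ⟨a, haM, (hhchar _).2 ⟨hw2prop a haγ b (hAκ hbA), a, haM, b, hbM, rfl,
          haγ, Or.inl haf⟩⟩
    obtain ⟨wA, hwAc, hwAchar⟩ := hcprop h hhF
    have hwAeq : wA = A := by
      apply ZFSet.ext
      intro b
      rw [hwAchar b, hrngA b]
    refine (hS0char A).2 ⟨hwAeq ▸ hwAc, h, hhM, hhF, fun b hbM => ?_⟩
    exact (hrngA b).symm
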